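/- arXiv:1304.2199 — 2 statements merged into one kernel-verified Lean document; each statement's English description precedes it below -/
import Mathlib

section
/- Let u_i, r_i, R_i, a_i be positive reals with r_i < R_i, and suppose for each subset J ⊆ {1,…,N} a complex matrix M_J indexed by J satisfies the Hadamard bound |det M_J| ≤ ∏_{i∈J} (Σ_{j∈J} (r_i u_j a_j / (u_i (R_i − r_i)))²)^{1/2}. Then Σ_{J⊆{1,…,N}} |det M_J| ≤ exp( Σ_{i=1}^N r_i/(u_i(R_i−r_i)) · (Σ_{j=1}^N u_j² a_j²)^{1/2} ). -/
open scoped BigOperators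

/-- Chain of estimates of Lemma 3.2: summing Hadamard bounds over all subsets
J of {1,…,N} yields the exponential bound. -/
theorem sum_hadamard_bounds_le_exp {N : ℕ} (u r R a : Fin N → ℝ)
    (hu : ∀ i, 0 < u i) (hr : ∀ i, 0 < r i) (ha : ∀ i, 0 < a i)
    (hrR : ∀ i, r i < R i)
    (M : (J : Finset (Fin N)) → Matrix J J ℂ)
    (hM : ∀ J : Finset (Fin N),
      ‖(M J).det‖
        ≤ ∏ i ∈ J, Real.sqrt (∑ j ∈ J,
            (r i * u j * a j / (u i * (R i - r i))) ^ 2)) :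
    ∑ J : Finset (Fin N), ‖(M J).det‖
      ≤ Real.exp (∑ i, r i / (u i * (R i - r i))
          * Real.sqrt (∑ j, (u j) ^ 2 * (a j) ^ 2)) := by
  set c : Fin N → ℝ := fun i => r i / (u i * (R i - r i))
      * Real.sqrt (∑ j, (u j) ^ 2 * (a j) ^ 2) with hc
  have hd : ∀ i, 0 < r i / (u i * (R i - r i)) := fun i =>
    div_pos (hr i) (mul_pos (hu i) (sub_pos.2 (hrR i)))
  have hcpos : ∀ i, 0 ≤ c i := fun i =>
    mul_nonneg (hd i).le (Real.sqrt_nonneg _)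
  have key : ∀ J : Finset (Fin N), ∀ i ∈ J,
      Real.sqrt (∑ j ∈ J, (r i * u j * a j / (u i * (R i - r i))) ^ 2) ≤ c i := by
    intro J i _
    have : ∑ j ∈ J, (r i * u j * a j / (u i * (R i - r i))) ^ 2
        = (r i / (u i * (R i - r i))) ^ 2 * ∑ j ∈ J, (u j) ^ 2 * (a j) ^ 2 := by
      rw [Finset.mul_sum]; exact Finset.sum_congr rfl fun j _ => by ring
    rw [this, Real.sqrt_mul (sq_nonneg _), Real.sqrt_sq (hd i).le, hc]
    refine mul_le_mul_of_nonneg_left ?_ (hd i).le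
    exact Real.sqrt_le_sqrt (Finset.sum_le_sum_of_subset_of_nonneg (Finset.subset_univ J)
      (fun j _ _ => mul_nonneg (sq_nonneg _) (sq_nonneg _)))
  calc ∑ J : Finset (Fin N), ‖(M J).det‖
      ≤ ∑ J : Finset (Fin N), ∏ i ∈ J, c i := by
        refine Finset.sum_le_sum fun J _ => (hM J).trans ?_
        exact Finset.prod_le_prod (fun i _ => Real.sqrt_nonneg _) (key J)
    _ = ∏ i, (c i + 1) := by
        rw [Finset.prod_add]
        simp [Finset.powerset_univ]
    _ ≤ ∏ i, Real.exp (c i) :=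
        Finset.prod_le_prod (fun i _ => by linarith [hcpos i])
          (fun i _ => by simpa [add_comm] using Real.add_one_le_exp (c i))
    _ = Real.exp (∑ i, c i) := (Real.exp_sum _ _).symm
end

section
/- (Formal inversion) Let (F_k(w))_{k∈ℕ} be a family of formal power series in countably many variables (w_j) with F_k(0) ≠ 0 for all k. Then there exists a unique family of formal power series (G_k(u))_{k∈ℕ} such that setting w_k(u) = u_k G_k(u), one has w_k(u) F_k(w(u)) = u_k as formal power series for all k. -/
open scoped BigOperators

/-- Substitution of the family of power series `w` (each with zero constant
term) into the power series `F`: the coefficient of a monomial `d` in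
`F(w)` is the (finitely supported) sum over monomials `m` of the coefficient
of `m` in `F` times the coefficient of `d` in `∏_j w_j^{m_j}`. -/
noncomputable def substSeries (w : ℕ → MvPowerSeries ℕ ℂ)
    (F : MvPowerSeries ℕ ℂ) : MvPowerSeries ℕ ℂ :=
  fun d => ∑ᶠ m : ℕ →₀ ℕ,
    MvPowerSeries.coeff m F *
      MvPowerSeries.coeff d (∏ j ∈ m.support, (w j) ^ m j)

namespace FormalInv

open MvPowerSeries

/-- Degree is additive. -/
lemma degree_add (a b : ℕ →₀ ℕ) : (a + b).degree = a.degree + b.degree := by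
  simp [Finsupp.degree_eq_weight_one, map_add]

lemma degree_le_of_le {a b : ℕ →₀ ℕ} (h : a ≤ b) : a.degree ≤ b.degree := by
  have h1 : b - a + a = b := tsub_add_cancel_of_le h
  have := degree_add (b - a) a
  rw [h1] at this
  omega

lemma degree_lt_of_lt {a b : ℕ →₀ ℕ} (h : a < b) : a.degree < b.degree := by
  have h1 : b - a + a = b := tsub_add_cancel_of_le h.le
  have h2 : b - a ≠ 0 := by
    intro h0
    rw [tsub_eq_zero_iff_le] at h0
    exact h.ne (le_antisymm h.le h0)
  have h3 : (b - a).degree ≠ 0 := fun hh => h2 ((Finsupp.degree_eq_zero_iff _).mp hh)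
  have := degree_add (b - a) a
  rw [h1] at this
  omega

/-- The product of `X j ^ m j` over the support of `m` is the monomial `m`. -/
lemma prod_X_pow (m : ℕ →₀ ℕ) :
    (∏ j ∈ m.support, (MvPowerSeries.X j : MvPowerSeries ℕ ℂ) ^ m j)
      = MvPowerSeries.monomial m 1 := by
  have h : (MvPolynomial.monomial m (1 : ℂ)) = ∏ j ∈ m.support, MvPolynomial.X j ^ m j := by
    rw [MvPolynomial.monomial_eq]
    simp [Finsupp.prod]
  calc (∏ j ∈ m.support, (MvPowerSeries.X j : MvPowerSeries ℕ ℂ) ^ m j)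
      = ((∏ j ∈ m.support, MvPolynomial.X j ^ m j : MvPolynomial ℕ ℂ) : MvPowerSeries ℕ ℂ) := by
        rw [show ((∏ j ∈ m.support, MvPolynomial.X j ^ m j : MvPolynomial ℕ ℂ) :
              MvPowerSeries ℕ ℂ)
            = MvPolynomial.coeToMvPowerSeries.ringHom
                (∏ j ∈ m.support, MvPolynomial.X j ^ m j) from rfl]
        rw [map_prod]
        simp [MvPolynomial.coeToMvPowerSeries.ringHom_apply]
    _ = MvPowerSeries.monomial m 1 := by rw [← h, MvPolynomial.coe_monomial]

/-- Coefficient formula for `substSeries` with substituted series `X j * G j`. -/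
lemma coeff_substSeries (G : ℕ → MvPowerSeries ℕ ℂ) (F : MvPowerSeries ℕ ℂ) (d : ℕ →₀ ℕ) :
    MvPowerSeries.coeff d (substSeries (fun j => MvPowerSeries.X j * G j) F)
      = ∑ m ∈ Finset.Iic d, MvPowerSeries.coeff m F *
          MvPowerSeries.coeff (d - m) (∏ j ∈ m.support, (G j) ^ m j) := by
  classical
  have key : ∀ m : ℕ →₀ ℕ,
      MvPowerSeries.coeff d (∏ j ∈ m.support, (MvPowerSeries.X j * G j) ^ m j)
        = if m ≤ d then MvPowerSeries.coeff (d - m) (∏ j ∈ m.support, (G j) ^ m j)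
          else 0 := by
    intro m
    have hsplit : (∏ j ∈ m.support, (MvPowerSeries.X j * G j) ^ m j)
        = MvPowerSeries.monomial m 1 * ∏ j ∈ m.support, (G j) ^ m j := by
      rw [← prod_X_pow, ← Finset.prod_mul_distrib]
      exact Finset.prod_congr rfl fun j _ => mul_pow _ _ _
    rw [hsplit, MvPowerSeries.coeff_monomial_mul]
    split_ifs with hmd <;> simp
  have hdef : MvPowerSeries.coeff d (substSeries (fun j => MvPowerSeries.X j * G j) F)
      = ∑ᶠ m : ℕ →₀ ℕ, MvPowerSeries.coeff m F *
          MvPowerSeries.coeff d (∏ j ∈ m.support, (MvPowerSeries.X j * G j) ^ m j) := rfl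
  rw [hdef]
  rw [finsum_eq_sum_of_support_subset _ (s := Finset.Iic d) ?_]
  · refine Finset.sum_congr rfl fun m hm => ?_
    rw [key m, if_pos (Finset.mem_Iic.mp hm)]
  · intro m hm
    simp only [Function.mem_support, ne_eq] at hm
    by_contra hmd
    simp only [Finset.coe_Iic, Set.mem_Iic] at hmd
    rw [key m, if_neg hmd, mul_zero] at hm
    exact hm rfl

/-- Agreement of two power series on all coefficients of degree at most `n`. -/
def Agl (n : ℕ) (φ ψ : MvPowerSeries ℕ ℂ) : Prop :=
  ∀ e : ℕ →₀ ℕ, e.degree ≤ n → MvPowerSeries.coeff e φ = MvPowerSeries.coeff e ψ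

lemma Agl.mul {n : ℕ} {φ ψ φ' ψ' : MvPowerSeries ℕ ℂ} (h : Agl n φ ψ) (h' : Agl n φ' ψ') :
    Agl n (φ * φ') (ψ * ψ') := by
  intro e he
  classical
  rw [MvPowerSeries.coeff_mul, MvPowerSeries.coeff_mul]
  refine Finset.sum_congr rfl fun x hx => ?_
  have hadd : x.1 + x.2 = e := Finset.HasAntidiagonal.mem_antidiagonal.mp hx
  have h1 : x.1.degree ≤ n := by
    have := degree_add x.1 x.2; rw [hadd] at this; omega
  have h2 : x.2.degree ≤ n := by
    have := degree_add x.1 x.2; rw [hadd] at this; omega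
  rw [h x.1 h1, h' x.2 h2]

lemma Agl.pow {n : ℕ} {φ ψ : MvPowerSeries ℕ ℂ} (h : Agl n φ ψ) (m : ℕ) :
    Agl n (φ ^ m) (ψ ^ m) := by
  induction m with
  | zero => intro e he; simp
  | succ m ih =>
      rw [pow_succ, pow_succ]
      exact ih.mul h

lemma Agl.prod {n : ℕ} {s : Finset ℕ} {φ ψ : ℕ → MvPowerSeries ℕ ℂ}
    (h : ∀ j ∈ s, Agl n (φ j) (ψ j)) :
    Agl n (∏ j ∈ s, φ j) (∏ j ∈ s, ψ j) := by
  classical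
  induction s using Finset.induction_on with
  | empty => intro e he; simp
  | @insert a s' hns ih =>
      rw [Finset.prod_insert hns, Finset.prod_insert hns]
      exact (h a (Finset.mem_insert_self a s')).mul
        (ih fun j hj => h j (Finset.mem_insert_of_mem hj))

lemma Agl.inv {n : ℕ} {φ ψ : MvPowerSeries ℕ ℂ}
    (h : Agl n φ ψ) : Agl n φ⁻¹ ψ⁻¹ := by
  classical
  have hc : MvPowerSeries.constantCoeff φ = MvPowerSeries.constantCoeff ψ := by
    have := h 0 (by simp)
    simpa using this
  -- strong induction on the degree
  suffices H : ∀ N : ℕ, ∀ e : ℕ →₀ ℕ, e.degree ≤ N → e.degree ≤ n →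
      MvPowerSeries.coeff e φ⁻¹ = MvPowerSeries.coeff e ψ⁻¹ by
    intro e he
    exact H e.degree e le_rfl he
  intro N
  induction N using Nat.strong_induction_on with
  | _ N ih =>
    intro e heN hen
    rw [MvPowerSeries.coeff_inv, MvPowerSeries.coeff_inv, hc]
    by_cases he0 : e = 0
    · simp [he0]
    · rw [if_neg he0, if_neg he0]
      congr 1
      refine Finset.sum_congr rfl fun x hx => ?_
      have hadd : x.1 + x.2 = e := Finset.HasAntidiagonal.mem_antidiagonal.mp hx
      by_cases hlt : x.2 < e
      · rw [if_pos hlt, if_pos hlt]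
        have hd2 : x.2.degree < e.degree := degree_lt_of_lt hlt
        have hd1 : x.1.degree ≤ n := by
          have := degree_add x.1 x.2; rw [hadd] at this; omega
        rw [h x.1 hd1]
        congr 1
        have hNpos : x.2.degree < N := by omega
        exact ih x.2.degree hNpos x.2 le_rfl (by omega)
      · rw [if_neg hlt, if_neg hlt]

/-- Agreement of two families of power series below degree `N`. -/
def AglFam (N : ℕ) (G G' : ℕ → MvPowerSeries ℕ ℂ) : Prop :=
  ∀ e : ℕ →₀ ℕ, e.degree < N → ∀ j, MvPowerSeries.coeff e (G j) = MvPowerSeries.coeff e (G' j)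

/-- Key congruence: the substitution only depends on lower-degree coefficients. -/
lemma subst_agl {N : ℕ} {G G' : ℕ → MvPowerSeries ℕ ℂ} (h : AglFam N G G')
    (F : MvPowerSeries ℕ ℂ) :
    Agl N (substSeries (fun j => MvPowerSeries.X j * G j) F)
        (substSeries (fun j => MvPowerSeries.X j * G' j) F) := by
  intro d hd
  rw [coeff_substSeries, coeff_substSeries]
  refine Finset.sum_congr rfl fun m hm => ?_
  have hmd : m ≤ d := Finset.mem_Iic.mp hm
  by_cases hm0 : m = 0
  · subst hm0
    simp only [Finsupp.support_zero, Finset.prod_empty, tsub_zero]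
  · congr 1
    have hdm : (d - m).degree < N := by
      have h1 : d - m + m = d := tsub_add_cancel_of_le hmd
      have h2 := degree_add (d - m) m
      rw [h1] at h2
      have h3 : m.degree ≠ 0 := fun hh => hm0 ((Finsupp.degree_eq_zero_iff _).mp hh)
      omega
    have hagl : ∀ j ∈ m.support, Agl ((d - m).degree) ((G j) ^ m j) ((G' j) ^ m j) := by
      intro j _
      refine Agl.pow ?_ (m j)
      intro e he
      exact h e (lt_of_le_of_lt he hdm) j
    exact Agl.prod hagl (d - m) le_rfl

/-- Constant coefficient of the substitution. -/
lemma constantCoeff_subst (G : ℕ → MvPowerSeries ℕ ℂ) (F : MvPowerSeries ℕ ℂ) :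
    MvPowerSeries.constantCoeff (substSeries (fun j => MvPowerSeries.X j * G j) F)
      = MvPowerSeries.constantCoeff F := by
  have h := coeff_substSeries G F 0
  rw [← MvPowerSeries.coeff_zero_eq_constantCoeff_apply,
    ← MvPowerSeries.coeff_zero_eq_constantCoeff_apply, h]
  rw [show (Finset.Iic (0 : ℕ →₀ ℕ)) = {0} from by
    ext x
    simp only [Finset.mem_Iic, Finset.mem_singleton]
    exact le_bot_iff]
  simp

end FormalInv

/-- Formal inversion: given formal power series F_k in countably many
variables with F_k(0) ≠ 0, there is a unique family of formal power series
G_k such that, setting w_k(u) = u_k G_k(u), one has w_k(u) F_k(w(u)) = u_k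
for all k. -/
theorem formal_lagrange_inversion (F : ℕ → MvPowerSeries ℕ ℂ)
    (hF : ∀ k, MvPowerSeries.constantCoeff (F k) ≠ 0) :
    ∃! G : ℕ → MvPowerSeries ℕ ℂ, ∀ k,
      (MvPowerSeries.X k * G k) *
          substSeries (fun j => MvPowerSeries.X j * G j) (F k)
        = MvPowerSeries.X k := by
  classical
  open FormalInv in
  -- the iteration map
  set Φ : (ℕ → MvPowerSeries ℕ ℂ) → (ℕ → MvPowerSeries ℕ ℂ) :=
    fun G k => (substSeries (fun j => MvPowerSeries.X j * G j) (F k))⁻¹ with hΦ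
  -- contraction property
  have contr : ∀ N G G', AglFam N G G' → AglFam (N + 1) (Φ G) (Φ G') := by
    intro N G G' h e he k
    have hagl : Agl N (substSeries (fun j => MvPowerSeries.X j * G j) (F k))
        (substSeries (fun j => MvPowerSeries.X j * G' j) (F k)) := subst_agl h (F k)
    exact hagl.inv e (by omega)
  -- the sequence of approximations
  set Gs : ℕ → ℕ → MvPowerSeries ℕ ℂ := fun n => Φ^[n] (fun _ => 0) with hGs
  have hstep : ∀ n, AglFam n (Gs n) (Gs (n + 1)) := by
    intro n
    induction n with
    | zero => intro e he k; omega
    | succ n ih =>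
        have h1 : Gs (n + 1) = Φ (Gs n) := Function.iterate_succ_apply' Φ n _
        have h2 : Gs (n + 2) = Φ (Gs (n + 1)) := Function.iterate_succ_apply' Φ (n + 1) _
        rw [h1, h2]
        exact contr n _ _ ih
  have hstab : ∀ n m, n ≤ m → ∀ e : ℕ →₀ ℕ, e.degree < n → ∀ k,
      MvPowerSeries.coeff e (Gs n k) = MvPowerSeries.coeff e (Gs m k) := by
    intro n m hnm
    induction m, hnm using Nat.le_induction with
    | base => intro e he k; rfl
    | succ m hnm ih =>
        intro e he k
        rw [ih e he k]
        exact hstep m e (by omega) k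
  -- the limit
  set Glim : ℕ → MvPowerSeries ℕ ℂ :=
    fun k => (fun d => MvPowerSeries.coeff d (Gs (d.degree + 1) k)) with hGlim
  have hGlimCoeff : ∀ (d : ℕ →₀ ℕ) k,
      MvPowerSeries.coeff d (Glim k) = MvPowerSeries.coeff d (Gs (d.degree + 1) k) := by
    intro d k; rfl
  have hGlimAgl : ∀ n, AglFam n Glim (Gs n) := by
    intro n e he k
    rw [hGlimCoeff]
    exact hstab (e.degree + 1) n (by omega) e (by omega) k
  have hfix : Φ Glim = Glim := by
    funext k
    apply MvPowerSeries.ext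
    intro d
    have h1 : AglFam d.degree Glim (Gs d.degree) := hGlimAgl d.degree
    have h2 := contr d.degree Glim (Gs d.degree) h1 d (by omega) k
    have h3 : Φ (Gs d.degree) = Gs (d.degree + 1) :=
      (Function.iterate_succ_apply' Φ d.degree _).symm
    rw [h2, h3, ← hGlimCoeff]
  -- Glim satisfies the equations
  have hmain : ∀ G : ℕ → MvPowerSeries ℕ ℂ, Φ G = G → ∀ k,
      (MvPowerSeries.X k * G k) * substSeries (fun j => MvPowerSeries.X j * G j) (F k)
        = MvPowerSeries.X k := by
    intro G hG k
    have hc : MvPowerSeries.constantCoeff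
        (substSeries (fun j => MvPowerSeries.X j * G j) (F k)) ≠ 0 := by
      rw [constantCoeff_subst]; exact hF k
    have hGk : G k = (substSeries (fun j => MvPowerSeries.X j * G j) (F k))⁻¹ :=
      (congrFun hG k).symm
    rw [mul_assoc, hGk, MvPowerSeries.inv_mul_cancel _ hc, mul_one]
  refine ⟨Glim, hmain Glim hfix, ?_⟩
  -- uniqueness
  intro G hG
  have hX : ∀ k : ℕ, (MvPowerSeries.X k : MvPowerSeries ℕ ℂ) ≠ 0 := by
    intro k h0
    have := MvPowerSeries.coeff_X (R := ℂ) (Finsupp.single k 1) k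
    rw [h0] at this
    simp at this
  have hunit : ∀ (G' : ℕ → MvPowerSeries ℕ ℂ),
      (∀ k, (MvPowerSeries.X k * G' k) *
          substSeries (fun j => MvPowerSeries.X j * G' j) (F k) = MvPowerSeries.X k) →
      ∀ k, G' k = (substSeries (fun j => MvPowerSeries.X j * G' j) (F k))⁻¹ := by
    intro G' hG' k
    have hc : MvPowerSeries.constantCoeff
        (substSeries (fun j => MvPowerSeries.X j * G' j) (F k)) ≠ 0 := by
      rw [constantCoeff_subst]; exact hF k
    have h1 : MvPowerSeries.X (R := ℂ) k *
        (G' k * substSeries (fun j => MvPowerSeries.X j * G' j) (F k))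
        = MvPowerSeries.X (R := ℂ) k * 1 := by
      rw [mul_one, ← mul_assoc]; exact hG' k
    have h2 : G' k * substSeries (fun j => MvPowerSeries.X j * G' j) (F k) = 1 :=
      mul_left_cancel₀ (hX k) h1
    exact (MvPowerSeries.eq_inv_iff_mul_eq_one hc).mpr h2
  have key : ∀ N, AglFam N G Glim := by
    intro N
    induction N with
    | zero => intro e he k; omega
    | succ N ih =>
        intro e he k
        rw [hunit G hG k, hunit Glim (hmain Glim hfix) k]
        have hagl : Agl N (substSeries (fun j => MvPowerSeries.X j * G j) (F k))
            (substSeries (fun j => MvPowerSeries.X j * Glim j) (F k)) := subst_agl ih (F k)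
        exact hagl.inv e (by omega)
  funext k
  apply MvPowerSeries.ext
  intro d
  exact key (d.degree + 1) d (by omega) k
end
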